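/- Let G be an undirected connected graph on nodes 1,…,N, let f, B, C satisfy the Assumption (OFP), and let xᵢ, kᵢⱼ be a continuously differentiable solution of the adaptively coupled system on [0,∞) with xᵢ(t) ∈ X for all t ≥ 0 and all i. Then the synchronization errors are square integrable: ∫₀^∞ ∑_{i=1}^N |ỹᵢ(t)|² dt < ∞, where ỹᵢ(t) = C·(xᵢ(t) − (1/N)∑_{j=1}^N xⱼ(t)). -/

import Mathlib

open Matrix MeasureTheory

section AuxSync
open Set

lemma hasDerivAt_dot {m : ℕ} {u w : ℝ → Fin m → ℝ} {u' w' : Fin m → ℝ} {t : ℝ}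
    (hu : HasDerivAt u u' t) (hw : HasDerivAt w w' t) :
    HasDerivAt (fun s => u s ⬝ᵥ w s) (u' ⬝ᵥ w t + u t ⬝ᵥ w') t := by
  simp only [dotProduct]
  rw [← Finset.sum_add_distrib]
  exact HasDerivAt.fun_sum fun a _ =>
    (((hasDerivAt_pi.1 hu) a).mul ((hasDerivAt_pi.1 hw) a))

lemma hasDerivAt_mulVec {m q : ℕ} (M : Matrix (Fin q) (Fin m) ℝ) {u : ℝ → Fin m → ℝ}
    {u' : Fin m → ℝ} {t : ℝ} (hu : HasDerivAt u u' t) :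
    HasDerivAt (fun s => M *ᵥ u s) (M *ᵥ u') t := by
  have := (M.mulVecLin.toContinuousLinearMap.hasFDerivAt (x := u t)).comp_hasDerivAt t hu
  simpa [Function.comp_def] using this

-- dot algebra: symmetric P
lemma dot_symm_swap {m : ℕ} {P : Matrix (Fin m) (Fin m) ℝ} (hP : Pᵀ = P)
    (u v : Fin m → ℝ) : u ⬝ᵥ (P *ᵥ v) = v ⬝ᵥ (P *ᵥ u) := by
  rw [dotProduct_mulVec, ← hP, vecMul_transpose, dotProduct_comm, hP]

lemma dot_self_nonneg {p : ℕ} (u : Fin p → ℝ) : 0 ≤ u ⬝ᵥ u :=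
  Finset.sum_nonneg fun a _ => mul_self_nonneg _

noncomputable def eSum {N p : ℕ} {G : SimpleGraph (Fin N)} (v : Fin N → Fin p → ℝ) :
    {a b : Fin N} → G.Walk a b → ℝ
  | _, _, .nil => 0
  | _, _, @SimpleGraph.Walk.cons _ _ a c _ _ w => ((v a - v c) ⬝ᵥ (v a - v c)) + eSum v w

lemma eSum_nonneg {N p : ℕ} {G : SimpleGraph (Fin N)} (v : Fin N → Fin p → ℝ)
    {a b : Fin N} (w : G.Walk a b) : 0 ≤ eSum v w := by
  induction w with
  | nil => simp [eSum]
  | cons h w ih => exact add_nonneg (dot_self_nonneg _) ih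


lemma dot_cauchy {p : ℕ} (u v : Fin p → ℝ) : (u ⬝ᵥ v)^2 ≤ (u ⬝ᵥ u) * (v ⬝ᵥ v) := by
  have := Finset.sum_mul_sq_le_sq_mul_sq Finset.univ u v
  simpa [dotProduct, sq] using this

lemma walk_bound {N p : ℕ} {G : SimpleGraph (Fin N)} (v : Fin N → Fin p → ℝ)
    {a b : Fin N} (w : G.Walk a b) :
    (v a - v b) ⬝ᵥ (v a - v b) ≤ (w.length : ℝ) * eSum v w := by
  induction w with
  | nil => simp [eSum]
  | @cons a c b h w ih =>
    set d1 := v a - v c with hd1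
    set d2 := v c - v b with hd2
    have hvab : v a - v b = d1 + d2 := by rw [hd1, hd2]; abel
    rw [hvab]
    set L : ℝ := (w.length : ℝ) with hL
    have hL0 : 0 ≤ L := by positivity
    have hS0 : 0 ≤ eSum v w := eSum_nonneg v w
    have hq : 0 ≤ (L • d1 - d2) ⬝ᵥ (L • d1 - d2) := dot_self_nonneg _
    have hexp : (L • d1 - d2) ⬝ᵥ (L • d1 - d2)
        = L^2 * (d1 ⬝ᵥ d1) - 2*L*(d1 ⬝ᵥ d2) + d2 ⬝ᵥ d2 := by
      simp [dotProduct_sub, sub_dotProduct, dotProduct_smul, smul_dotProduct,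
        dotProduct_comm d2 d1, smul_eq_mul]
      ring
    have hexp2 : (d1 + d2) ⬝ᵥ (d1 + d2)
        = (d1 ⬝ᵥ d1) + 2*(d1 ⬝ᵥ d2) + d2 ⬝ᵥ d2 := by
      simp [dotProduct_add, add_dotProduct, dotProduct_comm d2 d1]
      ring
    have hlen : ((SimpleGraph.Walk.cons h w).length : ℝ) = L + 1 := by
      simp [hL]
    rw [hlen, hexp2]
    show (d1 ⬝ᵥ d1) + 2*(d1 ⬝ᵥ d2) + d2 ⬝ᵥ d2 ≤ (L+1) * eSum v (SimpleGraph.Walk.cons h w)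
    have heS : eSum v (SimpleGraph.Walk.cons h w) = (d1 ⬝ᵥ d1) + eSum v w := rfl
    rw [heS]
    rcases eq_or_lt_of_le hL0 with h0 | hpos
    · -- L = 0
      have hc0 : d2 ⬝ᵥ d2 = 0 := le_antisymm (by nlinarith [ih]) (dot_self_nonneg d2)
      have ht0 : d1 ⬝ᵥ d2 = 0 := by
        have hcs := dot_cauchy d1 d2
        rw [hc0, mul_zero] at hcs
        exact sq_eq_zero_iff.mp (le_antisymm hcs (sq_nonneg _))
      rw [hc0, ht0]
      nlinarith [dot_self_nonneg d1]
    ·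
      have hL1 : 1 ≤ L := by
        rw [hL] at hpos ⊢
        exact_mod_cast Nat.one_le_iff_ne_zero.2 (by exact_mod_cast hpos.ne')
      rw [hexp] at hq
      nlinarith [ih, dot_self_nonneg d1, mul_nonneg hL0 hS0]

open Classical in
noncomputable def gEn {N p : ℕ} (G : SimpleGraph (Fin N)) (v : Fin N → Fin p → ℝ)
    (a : Fin N) : ℝ :=
  ∑ b, if G.Adj a b then (v a - v b) ⬝ᵥ (v a - v b) else 0

lemma gEn_nonneg {N p : ℕ} (G : SimpleGraph (Fin N)) (v : Fin N → Fin p → ℝ) (a : Fin N) :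
    0 ≤ gEn G v a :=
  Finset.sum_nonneg fun b _ => by
    split
    · exact dot_self_nonneg _
    · exact le_refl 0

lemma eSum_le_gEn {N p : ℕ} {G : SimpleGraph (Fin N)} (v : Fin N → Fin p → ℝ)
    {z : Fin N} :
    ∀ {a : Fin N} (w : G.Walk a z), w.IsPath → ∀ s : Finset (Fin N),
      (∀ u ∈ w.support, u ≠ z → u ∈ s) → eSum v w ≤ ∑ u ∈ s, gEn G v u := by
  intro a w
  induction w with
  | nil =>
    intro _ s _
    exact le_trans (le_of_eq rfl) (Finset.sum_nonneg fun u _ => gEn_nonneg G v u)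
  | @cons a c z h w ih =>
    intro hp s hs
    rw [SimpleGraph.Walk.cons_isPath_iff] at hp
    obtain ⟨hp', hnotin⟩ := hp
    have haz : a ≠ z := fun he => hnotin (he ▸ SimpleGraph.Walk.end_mem_support w)
    have has : a ∈ s := hs a (SimpleGraph.Walk.start_mem_support _) haz
    have hstep : eSum v (SimpleGraph.Walk.cons h w) = ((v a - v c) ⬝ᵥ (v a - v c)) + eSum v w := rfl
    have hedge : (v a - v c) ⬝ᵥ (v a - v c) ≤ gEn G v a := by
      classical
      have := Finset.single_le_sum (f := fun b => if G.Adj a b then (v a - v b) ⬝ᵥ (v a - v b) else 0)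
        (fun b _ => by split
                       · exact dot_self_nonneg _
                       · exact le_refl 0) (Finset.mem_univ c)
      simpa [gEn, if_pos h] using this
    have hIH : eSum v w ≤ ∑ u ∈ s.erase a, gEn G v u := by
      apply ih hp' (s.erase a)
      intro u hu huz
      exact Finset.mem_erase.2 ⟨fun he => hnotin (he ▸ hu), hs u (List.mem_cons_of_mem _ hu) huz⟩
    calc eSum v (SimpleGraph.Walk.cons h w)
        = ((v a - v c) ⬝ᵥ (v a - v c)) + eSum v w := hstep
      _ ≤ gEn G v a + ∑ u ∈ s.erase a, gEn G v u := add_le_add hedge hIH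
      _ = ∑ u ∈ s, gEn G v u := (Finset.add_sum_erase s _ has)

lemma graph_poincare {N p : ℕ} {G : SimpleGraph (Fin N)} (hG : G.Connected)
    (v : Fin N → Fin p → ℝ) (hsum : ∑ i, v i = 0) :
    ∑ i, v i ⬝ᵥ v i ≤ ((N:ℝ)^2/2) * ∑ a, gEn G v a := by
  classical
  have hN : 0 < N := by
    have := hG.nonempty
    exact Fin.pos_iff_nonempty.2 this
  set E := ∑ a, gEn G v a with hE
  have hE0 : 0 ≤ E := Finset.sum_nonneg fun a _ => gEn_nonneg G v a
  -- pairwise bound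
  have hpair : ∀ i j : Fin N, (v i - v j) ⬝ᵥ (v i - v j) ≤ (N:ℝ) * E := by
    intro i j
    obtain ⟨w⟩ := hG.preconnected i j
    have hp : w.bypass.IsPath := SimpleGraph.Walk.bypass_isPath w
    have hlen : (w.bypass.length : ℝ) ≤ (N:ℝ) := by
      have := hp.length_lt
      rw [Fintype.card_fin] at this
      exact_mod_cast this.le
    have h1 := walk_bound v w.bypass
    have h2 : eSum v w.bypass ≤ E := by
      have := eSum_le_gEn v w.bypass hp Finset.univ (fun u _ _ => Finset.mem_univ u)
      simpa [hE] using this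
    calc (v i - v j) ⬝ᵥ (v i - v j) ≤ (w.bypass.length : ℝ) * eSum v w.bypass := h1
      _ ≤ (N:ℝ) * E := by
          apply mul_le_mul hlen h2 (eSum_nonneg v _)
          positivity
  -- identity : ∑ i ∑ j |v i - v j|² = 2 N ∑ |v i|²
  have hid : ∑ i, ∑ j, (v i - v j) ⬝ᵥ (v i - v j) = 2 * (N:ℝ) * ∑ i, v i ⬝ᵥ v i := by
    have hz : ∀ i : Fin N, ∑ j, v i ⬝ᵥ v j = 0 := by
      intro i
      have h1 : ∑ j, v i ⬝ᵥ v j = v i ⬝ᵥ ∑ j, v j := by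
        simp only [dotProduct, Finset.sum_apply, Finset.mul_sum]
        rw [Finset.sum_comm]
      rw [h1, hsum, dotProduct_zero]
    have hexp : ∀ i j : Fin N, (v i - v j) ⬝ᵥ (v i - v j)
        = v i ⬝ᵥ v i - 2 * (v i ⬝ᵥ v j) + v j ⬝ᵥ v j := by
      intro i j
      simp [dotProduct_sub, sub_dotProduct, dotProduct_comm (v j) (v i)]
      ring
    have hrw : ∀ i : Fin N, ∑ j, (v i - v j) ⬝ᵥ (v i - v j)
        = (N:ℝ) * (v i ⬝ᵥ v i) + ∑ j, v j ⬝ᵥ v j := by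
      intro i
      simp only [hexp, Finset.sum_add_distrib, Finset.sum_sub_distrib, ← Finset.mul_sum, hz,
        Finset.sum_const, Finset.card_univ, Fintype.card_fin, nsmul_eq_mul]
      ring
    simp only [hrw, Finset.sum_add_distrib, Finset.sum_const, Finset.card_univ,
      Fintype.card_fin, nsmul_eq_mul, ← Finset.mul_sum]
    ring
  -- combine
  have hsum2 : ∑ i, ∑ j, (v i - v j) ⬝ᵥ (v i - v j) ≤ (N:ℝ)^2 * ((N:ℝ) * E) := by
    calc ∑ i, ∑ j, (v i - v j) ⬝ᵥ (v i - v j)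
        ≤ ∑ i : Fin N, ∑ j : Fin N, (N:ℝ) * E :=
          Finset.sum_le_sum fun i _ => Finset.sum_le_sum fun j _ => hpair i j
      _ = (N:ℝ)^2 * ((N:ℝ) * E) := by
          simp [Finset.sum_const, Finset.card_univ]
          ring
  rw [hid] at hsum2
  have hNpos : (0:ℝ) < N := by exact_mod_cast hN
  nlinarith [hsum2]

lemma ofp_segment {n p : ℕ} {f : (Fin n → ℝ) → (Fin n → ℝ)}
    {J : (Fin n → ℝ) → Matrix (Fin n) (Fin n) ℝ}
    (hf : ∀ z, HasFDerivAt f ((J z).mulVecLin.toContinuousLinearMap) z)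
    {C : Matrix (Fin p) (Fin n) ℝ}
    {X : Set (Fin n → ℝ)} (hX : Convex ℝ X)
    {θ : ℝ}
    {P : Matrix (Fin n) (Fin n) ℝ} (hPsymm : Pᵀ = P)
    (hLMI : ∀ z ∈ X, ∀ v : Fin n → ℝ,
      v ⬝ᵥ ((P * J z + (J z)ᵀ * P) *ᵥ v) ≤ θ * ((C *ᵥ v) ⬝ᵥ (C *ᵥ v)))
    {a b : Fin n → ℝ} (ha : a ∈ X) (hb : b ∈ X) :
    2 * ((b - a) ⬝ᵥ (P *ᵥ (f b - f a)))
      ≤ θ * ((C *ᵥ (b - a)) ⬝ᵥ (C *ᵥ (b - a))) := by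
  set e := b - a with he
  set M := θ * ((C *ᵥ e) ⬝ᵥ (C *ᵥ e)) with hM
  set g : ℝ → ℝ := fun s => 2 * (e ⬝ᵥ (P *ᵥ (f (a + s • e)))) with hg
  -- derivative of g
  have hgderiv : ∀ s : ℝ, HasDerivAt g (2 * (e ⬝ᵥ (P *ᵥ (J (a + s • e) *ᵥ e)))) s := by
    intro s
    have hφ : HasDerivAt (fun s : ℝ => a + s • e) e s := by
      simpa using (hasDerivAt_const s a).fun_add ((hasDerivAt_id s).smul_const e)
    have hfφ : HasDerivAt (fun s : ℝ => f (a + s • e)) (J (a + s • e) *ᵥ e) s := by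
      have := (hf (a + s • e)).comp_hasDerivAt s hφ
      simpa [Function.comp_def] using this
    have hPf : HasDerivAt (fun s : ℝ => P *ᵥ f (a + s • e)) (P *ᵥ (J (a + s • e) *ᵥ e)) s :=
      hasDerivAt_mulVec P hfφ
    have hdot := hasDerivAt_dot (hasDerivAt_const s e) hPf
    simpa using hdot.const_mul 2
  -- bound on the derivative inside X
  have hbnd : ∀ s ∈ Set.Icc (0:ℝ) 1, 2 * (e ⬝ᵥ (P *ᵥ (J (a + s • e) *ᵥ e))) ≤ M := by
    intro s hs
    have hz : a + s • e ∈ X := hX.add_smul_sub_mem ha hb hs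
    have hLMI' := hLMI _ hz e
    have hsplit : e ⬝ᵥ ((P * J (a + s • e) + (J (a + s • e))ᵀ * P) *ᵥ e)
        = 2 * (e ⬝ᵥ (P *ᵥ (J (a + s • e) *ᵥ e))) := by
      rw [add_mulVec, dotProduct_add, ← mulVec_mulVec, ← mulVec_mulVec]
      have h1 : e ⬝ᵥ ((J (a + s • e))ᵀ *ᵥ (P *ᵥ e))
          = e ⬝ᵥ (P *ᵥ (J (a + s • e) *ᵥ e)) := by
        rw [dotProduct_mulVec e, vecMul_transpose, dot_symm_swap hPsymm e]
      rw [h1]; ring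
    rw [hsplit] at hLMI'
    exact hLMI'
  -- monotonicity of h s = M * s - g s on [0,1]
  set h : ℝ → ℝ := fun s => M * s - g s with hh
  have hhd : ∀ s : ℝ, HasDerivAt h (M - 2 * (e ⬝ᵥ (P *ᵥ (J (a + s • e) *ᵥ e)))) s := by
    intro s
    have := ((hasDerivAt_id s).const_mul M).fun_sub (hgderiv s)
    simpa using this
  have hmono : MonotoneOn h (Set.Icc (0:ℝ) 1) := by
    apply monotoneOn_of_deriv_nonneg (convex_Icc 0 1)
    · exact fun s _ => ((hhd s).continuousAt).continuousWithinAt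
    · exact fun s _ => ((hhd s).differentiableAt).differentiableWithinAt
    · intro s hs
      rw [interior_Icc] at hs
      rw [(hhd s).deriv]
      have := hbnd s (Set.mem_Icc_of_Ioo hs)
      linarith
  have h01 := hmono (Set.left_mem_Icc.2 zero_le_one) (Set.right_mem_Icc.2 zero_le_one) zero_le_one
  have hg1 : g 1 = 2 * (e ⬝ᵥ (P *ᵥ f b)) := by
    rw [hg]; simp [he]
  have hg0 : g 0 = 2 * (e ⬝ᵥ (P *ᵥ f a)) := by
    rw [hg]; simp
  rw [hh] at h01
  simp only [mul_zero, mul_one, hg0, hg1] at h01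
  rw [mulVec_sub, dotProduct_sub]
  rw [hM] at h01
  linarith

lemma dot_sum_left {m : ℕ} {ι : Type*} (s : Finset ι) (v : ι → Fin m → ℝ) (w : Fin m → ℝ) :
    (∑ i ∈ s, v i) ⬝ᵥ w = ∑ i ∈ s, v i ⬝ᵥ w := by
  simp only [dotProduct, Finset.sum_apply, Finset.sum_mul]
  rw [Finset.sum_comm]

lemma dot_sum_right {m : ℕ} {ι : Type*} (s : Finset ι) (v : Fin m → ℝ) (w : ι → Fin m → ℝ) :
    v ⬝ᵥ (∑ i ∈ s, w i) = ∑ i ∈ s, v ⬝ᵥ w i := by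
  simp only [dotProduct, Finset.sum_apply, Finset.mul_sum]
  rw [Finset.sum_comm]

lemma mulVec_sum' {m q : ℕ} {ι : Type*} (s : Finset ι) (M : Matrix (Fin q) (Fin m) ℝ)
    (v : ι → Fin m → ℝ) : M *ᵥ (∑ i ∈ s, v i) = ∑ i ∈ s, M *ᵥ v i := by
  show M.mulVecLin _ = _
  rw [map_sum]
  rfl

lemma continuousOn_dot {m : ℕ} {u w : ℝ → Fin m → ℝ} {s : Set ℝ}
    (hu : ContinuousOn u s) (hw : ContinuousOn w s) :
    ContinuousOn (fun t => u t ⬝ᵥ w t) s := by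
  simp only [dotProduct]
  apply continuousOn_finset_sum
  intro a _
  exact (((continuous_apply a).comp_continuousOn hu)).mul ((continuous_apply a).comp_continuousOn hw)

lemma continuousOn_mulVec {m q : ℕ} {u : ℝ → Fin m → ℝ} {s : Set ℝ}
    (M : Matrix (Fin q) (Fin m) ℝ) (hu : ContinuousOn u s) :
    ContinuousOn (fun t => M *ᵥ u t) s :=
  M.mulVecLin.toContinuousLinearMap.continuous.comp_continuousOn hu



lemma sym_double_sum {N p : ℕ} (κk : Fin N → Fin N → ℝ)
    (hsym : ∀ i j, κk i j = κk j i) (v : Fin N → Fin p → ℝ) :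
    2 * ∑ i, ∑ j, κk i j * (v i ⬝ᵥ (v j - v i))
      = - ∑ i, ∑ j, κk i j * ((v i - v j) ⬝ᵥ (v i - v j)) := by
  have hswap : ∑ i, ∑ j, κk i j * (v i ⬝ᵥ (v j - v i))
      = ∑ i, ∑ j, κk i j * (v j ⬝ᵥ (v i - v j)) := by
    rw [Finset.sum_comm]
    refine Finset.sum_congr rfl fun i _ => Finset.sum_congr rfl fun j _ => ?_
    rw [hsym]
  have hpt : ∀ i j : Fin N, κk i j * (v i ⬝ᵥ (v j - v i)) + κk i j * (v j ⬝ᵥ (v i - v j))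
      = - (κk i j * ((v i - v j) ⬝ᵥ (v i - v j))) := by
    intro i j
    simp only [dotProduct_sub, sub_dotProduct, dotProduct_comm (v j) (v i)]
    ring
  calc 2 * ∑ i, ∑ j, κk i j * (v i ⬝ᵥ (v j - v i))
      = (∑ i, ∑ j, κk i j * (v i ⬝ᵥ (v j - v i)))
        + ∑ i, ∑ j, κk i j * (v j ⬝ᵥ (v i - v j)) := by rw [← hswap]; ring
    _ = ∑ i, ∑ j, (κk i j * (v i ⬝ᵥ (v j - v i)) + κk i j * (v j ⬝ᵥ (v i - v j))) := by
        rw [← Finset.sum_add_distrib]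
        exact Finset.sum_congr rfl fun i _ => (Finset.sum_add_distrib).symm
    _ = - ∑ i, ∑ j, κk i j * ((v i - v j) ⬝ᵥ (v i - v j)) := by
        simp only [hpt, Finset.sum_neg_distrib]

end AuxSync

open Set in
set_option maxHeartbeats 1600000 in
/-- Square integrability of the synchronization errors: for the adaptively
coupled system under Assumption (OFP) with states remaining in `X`, one has
`∫₀^∞ ∑ᵢ |ỹᵢ(t)|² dt < ∞`. -/
theorem synchronization_error_L2
    {n p N : ℕ}
    (G : SimpleGraph (Fin N)) (hG : G.Connected)
    (f : (Fin n → ℝ) → (Fin n → ℝ))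
    (J : (Fin n → ℝ) → Matrix (Fin n) (Fin n) ℝ)
    (hf : ∀ z, HasFDerivAt f ((J z).mulVecLin.toContinuousLinearMap) z)
    (hJcont : Continuous J)
    (B : Matrix (Fin n) (Fin p) ℝ) (C : Matrix (Fin p) (Fin n) ℝ)
    -- Assumption (OFP)
    (X : Set (Fin n → ℝ)) (hX : Convex ℝ X)
    (θ : ℝ) (hθ : 0 < θ)
    (P : Matrix (Fin n) (Fin n) ℝ) (hP : P.PosDef)
    (hLMI : ∀ z ∈ X, ∀ v : Fin n → ℝ,
      v ⬝ᵥ ((P * J z + (J z)ᵀ * P) *ᵥ v) ≤ θ * ((C *ᵥ v) ⬝ᵥ (C *ᵥ v)))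
    (hPB : P * B = Cᵀ)
    -- a continuously differentiable solution of the adaptively coupled system on `[0,∞)`
    (x : Fin N → ℝ → (Fin n → ℝ)) (k : Fin N → Fin N → ℝ → ℝ)
    (γ : Fin N → Fin N → ℝ)
    (hγsym : ∀ i j, γ i j = γ j i)
    (hγpos : ∀ i j, G.Adj i j → 0 < γ i j)
    (hksym : ∀ i j t, k i j t = k j i t)
    (hknonadj : ∀ i j, ¬ G.Adj i j → ∀ t, k i j t = 0)
    (hxode : ∀ i, ∀ t, 0 ≤ t →
      HasDerivAt (x i)
        (f (x i t) + B *ᵥ (∑ j, k i j t • (C *ᵥ x j t - C *ᵥ x i t))) t)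
    (hkode : ∀ i j, G.Adj i j → ∀ t, 0 ≤ t →
      HasDerivAt (k i j)
        (γ i j * ((C *ᵥ x i t - C *ᵥ x j t) ⬝ᵥ (C *ᵥ x i t - C *ᵥ x j t))) t)
    (hXinv : ∀ i, ∀ t, 0 ≤ t → x i t ∈ X) :
    -- conclusion: `t ↦ ∑ᵢ |ỹᵢ(t)|²` is integrable on `[0,∞)`
    IntegrableOn
      (fun t => ∑ i, ((C *ᵥ (x i t - (N : ℝ)⁻¹ • ∑ j, x j t)) ⬝ᵥ
        (C *ᵥ (x i t - (N : ℝ)⁻¹ • ∑ j, x j t))))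
      (Set.Ici (0 : ℝ)) := by
  classical
  have hN : 0 < N := Fin.pos_iff_nonempty.2 hG.nonempty
  have hNR : (0:ℝ) < N := by exact_mod_cast hN
  have hNc : (N:ℝ) * (N:ℝ)⁻¹ = 1 := mul_inv_cancel₀ hNR.ne'
  have hPsymm : Pᵀ = P := by
    have := hP.isHermitian
    simpa [Matrix.IsHermitian, Matrix.conjTranspose_eq_transpose_of_trivial] using this
  -- basic definitions
  set W : ℝ → ℝ := fun t => ∑ i, ((C *ᵥ (x i t - (N : ℝ)⁻¹ • ∑ j, x j t)) ⬝ᵥ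
        (C *ᵥ (x i t - (N : ℝ)⁻¹ • ∑ j, x j t))) with hWdef
  set e : Fin N → ℝ → (Fin n → ℝ) := fun i t => x i t - (N:ℝ)⁻¹ • ∑ j, x j t with hedef
  have hWe : ∀ t, W t = ∑ i, ((C *ᵥ e i t) ⬝ᵥ (C *ᵥ e i t)) := fun t => rfl
  set d : Fin N → ℝ → (Fin n → ℝ) := fun i t =>
    f (x i t) + B *ᵥ (∑ j, k i j t • (C *ᵥ x j t - C *ᵥ x i t)) with hddef
  set e' : Fin N → ℝ → (Fin n → ℝ) := fun i t => d i t - (N:ℝ)⁻¹ • ∑ j, d j t with he'def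
  set ty : Fin N → ℝ → (Fin p → ℝ) := fun i t => C *ᵥ e i t with htydef
  set κ : ℝ := ((N:ℝ)^2 * (θ+1))/2 with hκdef
  set q : Fin N → Fin N → ℝ → ℝ := fun i j t => (ty i t - ty j t) ⬝ᵥ (ty i t - ty j t) with hqdef
  set Vp : ℝ → ℝ := fun t => ∑ i, e i t ⬝ᵥ (P *ᵥ e i t) with hVpdef
  set Vk : ℝ → ℝ := fun t => ∑ i, ∑ j, if G.Adj i j then (k i j t - κ)^2 / (2 * γ i j) else 0
    with hVkdef
  set V : ℝ → ℝ := fun t => Vp t + Vk t with hVdef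
  set DV : ℝ → ℝ := fun t =>
    (∑ i, (e' i t ⬝ᵥ (P *ᵥ e i t) + e i t ⬝ᵥ (P *ᵥ e' i t)))
      + (∑ i, ∑ j, if G.Adj i j then (k i j t - κ) * q i j t else 0) with hDVdef
  -- the states are continuous on [0,∞)
  have hxc : ∀ i, ContinuousOn (x i) (Set.Ici 0) :=
    fun i t ht => ((hxode i t ht).continuousAt).continuousWithinAt
  have hec : ∀ i, ContinuousOn (e i) (Set.Ici 0) := by
    intro i
    exact (hxc i).sub ((continuousOn_finset_sum _ fun j _ => hxc j).fun_const_smul _)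
  have htyc : ∀ i, ContinuousOn (ty i) (Set.Ici 0) := fun i => continuousOn_mulVec C (hec i)
  have hkc : ∀ i j, ContinuousOn (k i j) (Set.Ici 0) := by
    intro i j
    by_cases hadj : G.Adj i j
    · exact fun t ht => ((hkode i j hadj t ht).continuousAt).continuousWithinAt
    · have : k i j = fun _ => 0 := funext fun t => hknonadj i j hadj t
      rw [this]; exact continuousOn_const
  have hWc : ContinuousOn W (Set.Ici 0) :=
    continuousOn_finset_sum _ fun i _ => continuousOn_dot (htyc i) (htyc i)
  have hWnn : ∀ t, 0 ≤ W t := fun t => Finset.sum_nonneg fun i _ => dot_self_nonneg _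
  -- derivative of V
  have hyd : ∀ i j t, C *ᵥ x i t - C *ᵥ x j t = ty i t - ty j t := by
    intro i j t
    simp only [htydef, hedef, mulVec_sub]
    abel
  have hVd : ∀ t, 0 ≤ t → HasDerivAt V (DV t) t := by
    intro t ht
    have hd : ∀ j, HasDerivAt (x j) (d j t) t := fun j => hxode j t ht
    have hde : ∀ i, HasDerivAt (e i) (e' i t) t := by
      intro i
      exact (hd i).sub ((HasDerivAt.fun_sum fun j _ => hd j).fun_const_smul ((N:ℝ)⁻¹))
    have hVp' : HasDerivAt Vp (∑ i, (e' i t ⬝ᵥ (P *ᵥ e i t) + e i t ⬝ᵥ (P *ᵥ e' i t))) t := by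
      rw [hVpdef]
      exact HasDerivAt.fun_sum fun i _ => hasDerivAt_dot (hde i) (hasDerivAt_mulVec P (hde i))
    have hVk' : HasDerivAt Vk (∑ i, ∑ j, if G.Adj i j then (k i j t - κ) * q i j t else 0) t := by
      rw [hVkdef]
      apply HasDerivAt.fun_sum
      intro i _
      apply HasDerivAt.fun_sum
      intro j _
      by_cases hadj : G.Adj i j
      · simp only [if_pos hadj]
        have hk := hkode i j hadj t ht
        have hq : γ i j * ((C *ᵥ x i t - C *ᵥ x j t) ⬝ᵥ (C *ᵥ x i t - C *ᵥ x j t))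
            = γ i j * q i j t := by rw [hyd i j t]
        rw [hq] at hk
        have h2 := ((hk.sub_const κ).fun_pow 2).div_const (2 * γ i j)
        have hγ := (hγpos i j hadj).ne'
        convert h2 using 1
        · rfl
        field_simp
        ring
      · simp only [if_neg hadj]
        exact hasDerivAt_const t 0
    rw [hVdef, hDVdef]
    exact hVp'.add hVk'
  -- key differential inequality
  have hDVle : ∀ t, 0 ≤ t → DV t ≤ -W t := by
    intro t ht
    set u : Fin N → Fin p → ℝ := fun i => ∑ j, k i j t • (C *ᵥ x j t - C *ᵥ x i t) with hudef
    set xbar : Fin n → ℝ := (N:ℝ)⁻¹ • ∑ j, x j t with hxbardef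
    -- sum of couplings vanishes
    have husum : ∑ i, u i = 0 := by
      have hswap : ∑ i, u i = - ∑ i, u i := by
        calc ∑ i, u i = ∑ i, ∑ j, k i j t • (C *ᵥ x j t - C *ᵥ x i t) := rfl
          _ = ∑ i, ∑ j, k j i t • (C *ᵥ x i t - C *ᵥ x j t) :=
              Finset.sum_comm
          _ = ∑ i, ∑ j, -(k i j t • (C *ᵥ x j t - C *ᵥ x i t)) := by
              refine Finset.sum_congr rfl fun i _ => Finset.sum_congr rfl fun j _ => ?_
              rw [hksym j i t, ← smul_neg, neg_sub]
          _ = - ∑ i, u i := by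
              simp only [Finset.sum_neg_distrib]; rfl
      have h2 : (∑ i, u i) + (∑ i, u i) = 0 := by
        nth_rewrite 1 [hswap]
        simp
      have h3 : (2:ℝ) • ∑ i, u i = 0 := by rw [two_smul]; exact h2
      have := smul_eq_zero.mp h3
      rcases this with h | h
      · norm_num at h
      · exact h
    have hdsum : ∑ j, d j t = ∑ j, f (x j t) := by
      have h1 : ∑ j, d j t = (∑ j, f (x j t)) + ∑ j, B *ᵥ u j := by
        rw [← Finset.sum_add_distrib]
      rw [h1, ← mulVec_sum', husum, mulVec_zero, add_zero]
    have he'eq : ∀ i, e' i t = (f (x i t) - (N:ℝ)⁻¹ • ∑ j, f (x j t)) + B *ᵥ u i := by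
      intro i
      have h0 : e' i t = d i t - (N:ℝ)⁻¹ • ∑ j, d j t := rfl
      rw [h0, hdsum]
      have h1 : d i t = f (x i t) + B *ᵥ u i := rfl
      rw [h1]
      abel
    have hesum : ∑ i, e i t = 0 := by
      have h0 : ∑ i, e i t = ∑ i, (x i t - (N:ℝ)⁻¹ • ∑ j, x j t) := rfl
      rw [h0, Finset.sum_sub_distrib, Finset.sum_const, Finset.card_univ, Fintype.card_fin,
        ← Nat.cast_smul_eq_nsmul ℝ, smul_smul, hNc, one_smul, sub_self]
    have htysum : ∑ i, ty i t = 0 := by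
      have h0 : ∑ i, ty i t = ∑ i, C *ᵥ e i t := rfl
      rw [h0, ← mulVec_sum', hesum, mulVec_zero]
    have hswapP : ∀ i, e' i t ⬝ᵥ (P *ᵥ e i t) = e i t ⬝ᵥ (P *ᵥ e' i t) :=
      fun i => dot_symm_swap hPsymm _ _
    have hdecomp : ∀ i, e i t ⬝ᵥ (P *ᵥ e' i t)
        = e i t ⬝ᵥ (P *ᵥ (f (x i t) - f xbar))
          + e i t ⬝ᵥ (P *ᵥ (f xbar - (N:ℝ)⁻¹ • ∑ j, f (x j t)))
          + ty i t ⬝ᵥ u i := by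
      intro i
      rw [he'eq i]
      have h1 : (f (x i t) - (N:ℝ)⁻¹ • ∑ j, f (x j t)) + B *ᵥ u i
          = ((f (x i t) - f xbar) + (f xbar - (N:ℝ)⁻¹ • ∑ j, f (x j t))) + B *ᵥ u i := by abel
      rw [h1, mulVec_add, dotProduct_add, mulVec_add, dotProduct_add]
      congr 1
      rw [mulVec_mulVec, hPB, dotProduct_mulVec, vecMul_transpose]
    have hXbar : xbar ∈ X := by
      have h1 : xbar = ∑ j, (N:ℝ)⁻¹ • x j t := by rw [hxbardef, Finset.smul_sum]
      rw [h1]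
      apply hX.sum_mem (fun j _ => by positivity)
      · rw [Finset.sum_const, Finset.card_univ, Fintype.card_fin, nsmul_eq_mul, hNc]
      · exact fun j _ => hXinv j t ht
    have hofp : ∀ i, 2 * (e i t ⬝ᵥ (P *ᵥ (f (x i t) - f xbar)))
        ≤ θ * (ty i t ⬝ᵥ ty i t) := by
      intro i
      have h1 := ofp_segment hf hX hPsymm hLMI hXbar (hXinv i t ht)
      have hxe : x i t - xbar = e i t := rfl
      rw [hxe] at h1
      exact h1
    have hWty : W t = ∑ i, ty i t ⬝ᵥ ty i t := hWe t
    have hA : ∑ i, 2 * (e i t ⬝ᵥ (P *ᵥ (f (x i t) - f xbar))) ≤ θ * W t := by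
      calc ∑ i, 2 * (e i t ⬝ᵥ (P *ᵥ (f (x i t) - f xbar)))
          ≤ ∑ i, θ * (ty i t ⬝ᵥ ty i t) := Finset.sum_le_sum fun i _ => hofp i
        _ = θ * W t := by rw [← Finset.mul_sum, hWty]
    have hBzero : ∑ i, 2 * (e i t ⬝ᵥ (P *ᵥ (f xbar - (N:ℝ)⁻¹ • ∑ j, f (x j t)))) = 0 := by
      rw [← Finset.mul_sum, ← dot_sum_left, hesum, zero_dotProduct, mul_zero]
    have hcoup : 2 * ∑ i, ty i t ⬝ᵥ u i = - ∑ i, ∑ j, k i j t * q i j t := by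
      have h1 : ∀ i, ty i t ⬝ᵥ u i = ∑ j, k i j t * (ty i t ⬝ᵥ (ty j t - ty i t)) := by
        intro i
        have h0 : ty i t ⬝ᵥ u i = ∑ j, ty i t ⬝ᵥ (k i j t • (C *ᵥ x j t - C *ᵥ x i t)) :=
          dot_sum_right _ _ _
        rw [h0]
        refine Finset.sum_congr rfl fun j _ => ?_
        rw [hyd j i t, dotProduct_smul, smul_eq_mul]
      simp only [h1]
      have h2 := sym_double_sum (fun i j => k i j t) (fun i j => hksym i j t) (fun i => ty i t)
      simpa [hqdef] using h2
    have hS2 : ∑ i, ∑ j, (if G.Adj i j then (k i j t - κ) * q i j t else 0)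
        = (∑ i, ∑ j, k i j t * q i j t) - κ * ∑ a, gEn G (fun i => ty i t) a := by
      rw [Finset.mul_sum, ← Finset.sum_sub_distrib]
      refine Finset.sum_congr rfl fun i _ => ?_
      simp only [gEn]
      rw [Finset.mul_sum, ← Finset.sum_sub_distrib]
      refine Finset.sum_congr rfl fun j _ => ?_
      by_cases hadj : G.Adj i j
      · simp only [if_pos hadj, hqdef]
        ring
      · simp only [if_neg hadj, hknonadj i j hadj t]
        ring
    have hpoin : W t ≤ ((N:ℝ)^2/2) * ∑ a, gEn G (fun i => ty i t) a := by
      have h1 := graph_poincare hG (fun i => ty i t) htysum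
      rw [hWty]
      exact h1
    -- assemble
    have hsum1 : ∑ i, (e' i t ⬝ᵥ (P *ᵥ e i t) + e i t ⬝ᵥ (P *ᵥ e' i t))
        = (∑ i, 2 * (e i t ⬝ᵥ (P *ᵥ (f (x i t) - f xbar))))
          + (∑ i, 2 * (e i t ⬝ᵥ (P *ᵥ (f xbar - (N:ℝ)⁻¹ • ∑ j, f (x j t)))))
          + 2 * (∑ i, ty i t ⬝ᵥ u i) := by
      rw [Finset.mul_sum, ← Finset.sum_add_distrib, ← Finset.sum_add_distrib]
      refine Finset.sum_congr rfl fun i _ => ?_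
      rw [hswapP i, hdecomp i]
      ring
    have hDV : DV t = (∑ i, (e' i t ⬝ᵥ (P *ᵥ e i t) + e i t ⬝ᵥ (P *ᵥ e' i t)))
        + ∑ i, ∑ j, (if G.Adj i j then (k i j t - κ) * q i j t else 0) := rfl
    rw [hDV, hsum1, hBzero, hS2, hcoup]
    have hEg : 0 ≤ ∑ a, gEn G (fun i => ty i t) a :=
      Finset.sum_nonneg fun a _ => gEn_nonneg G _ a
    have hθ1 : (0:ℝ) ≤ θ + 1 := by linarith
    have hmul := mul_le_mul_of_nonneg_left hpoin hθ1
    have hκEg : (θ+1) * (((N:ℝ)^2/2) * ∑ a, gEn G (fun i => ty i t) a)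
        = κ * ∑ a, gEn G (fun i => ty i t) a := by
      rw [hκdef]; ring
    rw [hκEg] at hmul
    linarith [hA]
  -- V is nonnegative
  have hVnn : ∀ t, 0 ≤ t → 0 ≤ V t := by
    intro t _
    have h1 : 0 ≤ Vp t := Finset.sum_nonneg fun i _ => by
      have := hP.posSemidef.dotProduct_mulVec_nonneg (e i t)
      simpa using this
    have h2 : 0 ≤ Vk t := by
      apply Finset.sum_nonneg
      intro i _
      apply Finset.sum_nonneg
      intro j _
      split
      · next hadj =>
        have := hγpos i j hadj
        positivity
      · exact le_refl 0
    simp only [hVdef]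
    linarith
  -- DV is continuous on [0,∞)
  have hDVc : ContinuousOn DV (Set.Ici 0) := by
    have hfc : Continuous f := continuous_iff_continuousAt.2 fun z => (hf z).continuousAt
    have hdc : ∀ i, ContinuousOn (fun t => d i t) (Set.Ici 0) := by
      intro i
      apply (hfc.comp_continuousOn (hxc i)).add
      apply continuousOn_mulVec B
      apply continuousOn_finset_sum
      intro j _
      exact (hkc i j).smul ((continuousOn_mulVec C (hxc j)).sub (continuousOn_mulVec C (hxc i)))
    have he'c : ∀ i, ContinuousOn (fun t => e' i t) (Set.Ici 0) := by
      intro i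
      exact (hdc i).sub ((continuousOn_finset_sum _ fun j _ => hdc j).fun_const_smul _)
    apply ContinuousOn.add
    · apply continuousOn_finset_sum
      intro i _
      exact (continuousOn_dot (he'c i) (continuousOn_mulVec P (hec i))).add
        (continuousOn_dot (hec i) (continuousOn_mulVec P (he'c i)))
    · apply continuousOn_finset_sum
      intro i _
      apply continuousOn_finset_sum
      intro j _
      split
      · next hadj =>
        exact ((hkc i j).sub continuousOn_const).mul
          (continuousOn_dot ((htyc i).sub (htyc j)) ((htyc i).sub (htyc j)))
      · exact continuousOn_const
  -- integral bound
  have hInt : ∀ T, 0 ≤ T → ∫ s in (0:ℝ)..T, W s ≤ V 0 := by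
    intro T hT
    have huIcc : Set.uIcc (0:ℝ) T = Set.Icc 0 T := Set.uIcc_of_le hT
    have hsub : Set.Icc (0:ℝ) T ⊆ Set.Ici 0 := fun s hs => hs.1
    have hDVint : IntervalIntegrable DV volume 0 T :=
      ContinuousOn.intervalIntegrable (by rw [huIcc]; exact hDVc.mono hsub)
    have hWint : IntervalIntegrable W volume 0 T :=
      ContinuousOn.intervalIntegrable (by rw [huIcc]; exact hWc.mono hsub)
    have hftc : ∫ s in (0:ℝ)..T, DV s = V T - V 0 := by
      apply intervalIntegral.integral_eq_sub_of_hasDerivAt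
      · intro s hs
        rw [huIcc] at hs
        exact hVd s hs.1
      · exact hDVint
    have hmono : ∫ s in (0:ℝ)..T, W s ≤ ∫ s in (0:ℝ)..T, -DV s := by
      apply intervalIntegral.integral_mono_on hT hWint hDVint.neg
      intro s hs
      have h1 := hDVle s hs.1
      simp only [Pi.neg_apply]
      linarith
    have : ∫ s in (0:ℝ)..T, -DV s = -(V T - V 0) := by
      rw [intervalIntegral.integral_neg, hftc]
    rw [this] at hmono
    have := hVnn T hT
    linarith
  -- conclude integrability
  rw [integrableOn_Ici_iff_integrableOn_Ioi]
  apply integrableOn_Ioi_of_intervalIntegral_norm_bounded (V 0) 0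
    (b := fun r : ℝ => r) (l := Filter.atTop)
  · intro r
    rcases le_or_gt r 0 with hr | hr
    · rw [Set.Ioc_eq_empty (not_lt.mpr hr)]
      exact integrableOn_empty
    · have : IntegrableOn W (Set.Icc 0 r) volume :=
        (hWc.mono fun s hs => hs.1).integrableOn_compact isCompact_Icc
      exact this.mono_set Set.Ioc_subset_Icc_self
  · exact Filter.tendsto_id
  · filter_upwards [Filter.eventually_ge_atTop (0:ℝ)] with r hr
    have : ∫ s in (0:ℝ)..r, ‖W s‖ = ∫ s in (0:ℝ)..r, W s := by
      apply intervalIntegral.integral_congr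
      intro s _
      exact Real.norm_of_nonneg (hWnn s)
    rw [this]
    exact hInt r hr
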